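/- For every integer k ≥ 1, the following identity of polynomials in s over ℚ holds: binom(s,k) = ∑_{q=1}^{k} (s^q / q!) · (−1)^{k−q} · ∑_{k₁+⋯+k_q = k, k_i ≥ 1} 1/(k₁⋯k_q). -/

import Mathlib

/-- The polynomial `binom(s,k) = s(s-1)⋯(s-k+1)/k!` in `ℚ[s]`. -/
noncomputable def binomPoly (k : ℕ) : Polynomial ℚ :=
  (k.factorial : ℚ)⁻¹ • ∏ j ∈ Finset.range k, (Polynomial.X - Polynomial.C (j : ℚ))

open Finset PowerSeries Polynomial

noncomputable def Lser : PowerSeries ℚ := PowerSeries.mk fun n => (n : ℚ)⁻¹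

noncomputable def Acomp (k q : ℕ) : ℚ :=
  ∑ f ∈ Finset.finAntidiagonal q k, ∏ i, ((f i : ℚ))⁻¹

lemma sum_finAntidiagonal_succ {M : Type*} [AddCommMonoid M] (q n : ℕ)
    (F : (Fin (q + 1) → ℕ) → M) :
    ∑ f ∈ Finset.finAntidiagonal (q + 1) n, F f =
      ∑ p ∈ Finset.HasAntidiagonal.antidiagonal n, ∑ g ∈ Finset.finAntidiagonal q p.2, F (Fin.cons p.1 g) := by
  rw [Finset.sum_sigma']
  refine Finset.sum_nbij' (fun f => ⟨(f 0, ∑ i, Fin.tail f i), Fin.tail f⟩)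
    (fun p => Fin.cons p.1.1 p.2) ?_ ?_ ?_ ?_ ?_
  · intro f hf
    simp only [Finset.mem_finAntidiagonal] at hf
    refine Finset.mem_sigma.mpr ⟨Finset.HasAntidiagonal.mem_antidiagonal.mpr ?_, Finset.mem_finAntidiagonal.mpr rfl⟩
    rw [← hf, Fin.sum_univ_succ]; rfl
  · intro p hp
    simp only [Finset.mem_sigma, Finset.HasAntidiagonal.mem_antidiagonal, Finset.mem_finAntidiagonal] at hp
    simp only [Finset.mem_finAntidiagonal, Fin.sum_univ_succ, Fin.cons_zero, Fin.cons_succ]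
    rw [show ∑ i : Fin q, p.2 i = p.1.2 from hp.2, hp.1]
  · intro f _
    exact Fin.cons_self_tail f
  · rintro ⟨⟨a, b⟩, g⟩ hp
    simp only [Finset.mem_sigma, Finset.HasAntidiagonal.mem_antidiagonal, Finset.mem_finAntidiagonal] at hp
    simp [Fin.tail_cons, hp.2]
  · intro f _
    rw [Fin.cons_self_tail f]

lemma finAntidiagonal_zero' (n : ℕ) :
    Finset.finAntidiagonal 0 n = if n = 0 then {(fun _ => 0 : Fin 0 → ℕ)} else ∅ := by
  ext f
  simp only [Finset.mem_finAntidiagonal, Finset.sum_empty, Fin.sum_univ_zero]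
  split <;> rename_i h
  · subst h; simp [Subsingleton.elim f (fun _ => 0)]
  · simp [Ne.symm h]

lemma coeff_Lser_pow (q k : ℕ) : PowerSeries.coeff k (Lser ^ q) = Acomp k q := by
  induction q generalizing k with
  | zero =>
    rw [pow_zero, Acomp, finAntidiagonal_zero', PowerSeries.coeff_one]
    split <;> simp
  | succ q ih =>
    rw [pow_succ', PowerSeries.coeff_mul, Acomp, sum_finAntidiagonal_succ]
    refine Finset.sum_congr rfl fun p hp => ?_
    simp_rw [Fin.prod_univ_succ, Fin.cons_zero, Fin.cons_succ, ← Finset.mul_sum]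
    rw [← Acomp, ih, Lser, PowerSeries.coeff_mk]

lemma coeff_deriv_Lser (n : ℕ) : PowerSeries.coeff n (PowerSeries.derivative ℚ Lser) = 1 := by
  rw [PowerSeries.coeff_derivative, Lser, PowerSeries.coeff_mk]
  push_cast
  rw [inv_mul_cancel₀]
  positivity

lemma Acomp_zero_right (k : ℕ) : Acomp k 0 = if k = 0 then 1 else 0 := by
  rw [← coeff_Lser_pow, pow_zero, PowerSeries.coeff_one]

lemma Acomp_eq_zero_of_lt {k q : ℕ} (h : k < q) : Acomp k q = 0 := by
  refine Finset.sum_eq_zero fun f hf => ?_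
  rw [Finset.mem_finAntidiagonal] at hf
  have : ∃ i, f i = 0 := by
    by_contra hc
    push_neg at hc
    have : q ≤ ∑ i, f i := by
      calc q = ∑ _i : Fin q, 1 := by simp
      _ ≤ ∑ i, f i := Finset.sum_le_sum fun i _ => Nat.one_le_iff_ne_zero.mpr (hc i)
    omega
  obtain ⟨i, hi⟩ := this
  exact Finset.prod_eq_zero (Finset.mem_univ i) (by simp [hi])

lemma key_deriv (q k : ℕ) : (k : ℚ) * Acomp k q = q * ∑ m ∈ Finset.range k, Acomp m (q - 1) := by
  cases q with
  | zero =>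
    rcases Nat.eq_zero_or_pos k with h | h <;> simp [h, Acomp_zero_right]
  | succ q =>
    cases k with
    | zero => simp
    | succ k =>
      have h1 : ((k:ℚ) + 1) * Acomp (k+1) (q+1)
          = PowerSeries.coeff k (PowerSeries.derivative ℚ (Lser ^ (q+1))) := by
        rw [PowerSeries.coeff_derivative, coeff_Lser_pow]
        ring
      push_cast
      rw [h1, Derivation.leibniz_pow, Nat.add_sub_cancel, smul_eq_mul, map_nsmul, nsmul_eq_mul,
        PowerSeries.coeff_mul]
      rw [Finset.Nat.sum_antidiagonal_eq_sum_range_succ_mk]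
      simp_rw [coeff_Lser_pow, coeff_deriv_Lser, mul_one]
      push_cast; ring

lemma Acomp_rec (q k : ℕ) : ((k:ℚ) + 1) * Acomp (k+1) q
    = q * Acomp k (q - 1) + k * Acomp k q := by
  have h1 := key_deriv q (k+1)
  have h2 := key_deriv q k
  rw [Finset.sum_range_succ, mul_add] at h1
  push_cast at h1
  rw [h1, ← h2]; ring

noncomputable def ccoef (k q : ℕ) : ℚ :=
  (q.factorial : ℚ)⁻¹ * (-1 : ℚ) ^ (k - q) * Acomp k q

lemma inner_sum_eq (k q : ℕ) :
    (∑ f ∈ (Fintype.piFinset fun _ : Fin q => Finset.Icc 1 k).filter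
        (fun f => ∑ i, f i = k), ∏ i, ((f i : ℚ))⁻¹) = Acomp k q := by
  rw [Acomp]
  refine Finset.sum_subset ?_ ?_
  · intro f hf
    rw [Finset.mem_filter] at hf
    rw [Finset.mem_finAntidiagonal]
    exact hf.2
  · intro f hf hnf
    rw [Finset.mem_finAntidiagonal] at hf
    have : ∃ i, f i = 0 := by
      by_contra hc
      push_neg at hc
      apply hnf
      rw [Finset.mem_filter]
      refine ⟨Fintype.mem_piFinset.mpr fun i => ?_, hf⟩
      rw [Finset.mem_Icc]
      refine ⟨Nat.one_le_iff_ne_zero.mpr (hc i), ?_⟩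
      rw [← hf]
      exact Finset.single_le_sum (fun i _ => Nat.zero_le _) (Finset.mem_univ i)
    obtain ⟨i, hi⟩ := this
    exact Finset.prod_eq_zero (Finset.mem_univ i) (by simp [hi])

lemma ccoef_zero (k : ℕ) (hk : 1 ≤ k) : ccoef k 0 = 0 := by
  rw [ccoef, Acomp_zero_right, if_neg (by omega), mul_zero]

lemma ccoef_top (k : ℕ) : ccoef k (k + 1) = 0 := by
  rw [ccoef, Acomp_eq_zero_of_lt (by omega), mul_zero]

lemma c_rec (k q : ℕ) (hq1 : 1 ≤ q) (hq2 : q ≤ k + 1) :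
    ccoef (k+1) q = ((k:ℚ) + 1)⁻¹ * (ccoef k (q - 1) - k * ccoef k q) := by
  obtain ⟨q', rfl⟩ : ∃ q', q = q' + 1 := ⟨q - 1, by omega⟩
  have hA := Acomp_rec (q' + 1) k
  rw [Nat.add_sub_cancel] at hA ⊢
  have hk1 : ((k:ℚ) + 1) ≠ 0 := by positivity
  have hfac : ((q' + 1).factorial : ℚ) = ((q' : ℚ) + 1) * (q'.factorial : ℚ) := by
    rw [Nat.factorial_succ]; push_cast; ring
  have hfq : (q'.factorial : ℚ) ≠ 0 := Nat.cast_ne_zero.mpr (Nat.factorial_ne_zero _)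
  have hq1' : ((q' : ℚ) + 1) ≠ 0 := by positivity
  have ha : Acomp (k+1) (q'+1) =
      ((k:ℚ) + 1)⁻¹ * (((q':ℚ) + 1) * Acomp k q' + k * Acomp k (q'+1)) := by
    push_cast at hA
    field_simp
    linear_combination hA
  rcases Nat.lt_or_ge (q' + 1) (k + 1) with h | h
  · -- q' + 1 ≤ k
    have e1 : k + 1 - (q' + 1) = (k - (q' + 1)) + 1 := by omega
    have e2 : k - q' = (k - (q' + 1)) + 1 := by omega
    rw [ccoef, ccoef, ccoef, ha, e1, e2, hfac, pow_succ]
    field_simp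
    ring
  · have hq : q' = k := by omega
    subst hq
    have hz : Acomp q' (q' + 1) = 0 := Acomp_eq_zero_of_lt (by omega)
    rw [ccoef, ccoef, ccoef, ha, hz]
    simp only [Nat.sub_self, Nat.succ_sub_succ, pow_zero, mul_zero, add_zero]
    rw [hfac]
    field_simp
    simp

lemma Acomp_one_one : Acomp 1 1 = 1 := by
  rw [← coeff_Lser_pow, pow_one, Lser, PowerSeries.coeff_mk]
  norm_num

lemma binomPoly_succ (k : ℕ) : binomPoly (k + 1) =
    Polynomial.C (((k:ℚ) + 1)⁻¹) * ((Polynomial.X - Polynomial.C (k:ℚ)) * binomPoly k) := by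
  rw [binomPoly, binomPoly, Finset.prod_range_succ, Nat.factorial_succ]
  push_cast
  rw [mul_inv, Polynomial.smul_eq_C_mul, Polynomial.smul_eq_C_mul, map_mul]
  ring

theorem key (k : ℕ) (hk : 1 ≤ k) :
    binomPoly k = ∑ q ∈ Finset.Icc 1 k, Polynomial.C (ccoef k q) * Polynomial.X ^ q := by
  induction k, hk using Nat.le_induction with
  | base =>
    rw [show Finset.Icc 1 1 = {1} from rfl, Finset.sum_singleton]
    rw [binomPoly]
    simp [ccoef, Acomp_one_one]
  | succ k hk ih =>
    rw [binomPoly_succ, ih]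
    have expand : (Polynomial.X - Polynomial.C (k:ℚ)) *
        ∑ q ∈ Finset.Icc 1 k, Polynomial.C (ccoef k q) * Polynomial.X ^ q
        = (∑ q ∈ Finset.Icc 1 k, Polynomial.C (ccoef k q) * Polynomial.X ^ (q + 1)) -
          ∑ q ∈ Finset.Icc 1 k, Polynomial.C ((k:ℚ) * ccoef k q) * Polynomial.X ^ q := by
      rw [sub_mul, Finset.mul_sum, Finset.mul_sum]
      congr 1
      · exact Finset.sum_congr rfl fun q _ => by ring
      · exact Finset.sum_congr rfl fun q _ => by rw [map_mul]; ring
    have reindex : (∑ q ∈ Finset.Icc 1 k, Polynomial.C (ccoef k q) * Polynomial.X ^ (q + 1))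
        = ∑ q ∈ Finset.Icc 2 (k+1), Polynomial.C (ccoef k (q - 1)) * Polynomial.X ^ q := by
      rw [show Finset.Icc 2 (k+1) = Finset.map (addRightEmbedding 1) (Finset.Icc 1 k) from
        (Finset.map_add_right_Icc 1 k 1).symm, Finset.sum_map]
      exact Finset.sum_congr rfl fun q _ => by
        simp [addRightEmbedding, Nat.add_sub_cancel]
    have e1 : (∑ q ∈ Finset.Icc 2 (k+1), Polynomial.C (ccoef k (q - 1)) * Polynomial.X ^ q)
        = ∑ q ∈ Finset.Icc 1 (k+1), Polynomial.C (ccoef k (q - 1)) * Polynomial.X ^ q := by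
      refine Finset.sum_subset (Finset.Icc_subset_Icc_left (by omega)) fun q hq hnq => ?_
      rw [Finset.mem_Icc] at hq
      rw [Finset.mem_Icc] at hnq
      have : q = 1 := by omega
      subst this
      rw [show (1:ℕ) - 1 = 0 from rfl, ccoef_zero k hk, map_zero, zero_mul]
    have e2 : (∑ q ∈ Finset.Icc 1 k, Polynomial.C ((k:ℚ) * ccoef k q) * Polynomial.X ^ q)
        = ∑ q ∈ Finset.Icc 1 (k+1), Polynomial.C ((k:ℚ) * ccoef k q) * Polynomial.X ^ q := by
      refine Finset.sum_subset (Finset.Icc_subset_Icc_right (by omega)) fun q hq hnq => ?_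
      rw [Finset.mem_Icc] at hq
      rw [Finset.mem_Icc] at hnq
      have : q = k + 1 := by omega
      subst this
      rw [ccoef_top, mul_zero, map_zero, zero_mul]
    rw [expand, reindex, e1, e2, ← Finset.sum_sub_distrib, Finset.mul_sum]
    refine Finset.sum_congr rfl fun q hq => ?_
    rw [Finset.mem_Icc] at hq
    rw [c_rec k q hq.1 hq.2]
    simp only [map_mul, map_sub]
    ring

/-- For `k ≥ 1`, as polynomials in `s` over `ℚ`:
`binom(s,k) = ∑_{q=1}^{k} (s^q/q!) (-1)^(k-q) ∑_{k₁+⋯+k_q=k, kᵢ≥1} 1/(k₁⋯k_q)`. -/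
theorem binom_eq_sum_over_compositions (k : ℕ) (hk : 1 ≤ k) :
    binomPoly k =
      ∑ q ∈ Finset.Icc 1 k,
        Polynomial.C ((q.factorial : ℚ)⁻¹ * (-1 : ℚ) ^ (k - q) *
            ∑ f ∈ (Fintype.piFinset fun _ : Fin q => Finset.Icc 1 k).filter
                (fun f => ∑ i, f i = k),
              ∏ i, ((f i : ℚ))⁻¹) * Polynomial.X ^ q := by
  rw [key k hk]
  exact Finset.sum_congr rfl fun q _ => by rw [inner_sum_eq, ← ccoef]
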